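/- Let v₁, …, v_k be unit vectors in ℝⁿ, α ≥ 0, and define halfspaces Hᵢ = {x : ⟨vᵢ, x⟩ ≤ α}. Suppose η := min{‖Σᵢ λᵢ vᵢ‖ : λᵢ ≥ 0, Σᵢ λᵢ = 1} > 0. Let v = (Σᵢ λᵢ vᵢ)/‖Σᵢ λᵢ vᵢ‖ for some nonzero λ ∈ ℝ^k with nonnegative components, and let H = {x : ⟨v, x⟩ ≤ α/η}. Then ∩ᵢ₌₁^k Hᵢ ⊆ H. -/

import Mathlib

open scoped RealInnerProductSpace
open Metric

/-- Derived halfspace containment: with unit vectors `v i`, halfspaces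
`Hᵢ = {x : ⟪vᵢ, x⟫ ≤ α}`, and `η > 0` a lower bound for `‖∑ λᵢ vᵢ‖` over convex
combinations, any normalized nonnegative combination `w` of the `vᵢ` yields
`⋂ᵢ Hᵢ ⊆ {x : ⟪w, x⟫ ≤ α/η}`. -/
theorem derived_halfspace_containment {n k : ℕ}
    (v : Fin k → EuclideanSpace ℝ (Fin n)) (hv : ∀ i, ‖v i‖ = 1)
    (α η : ℝ) (hα : 0 ≤ α) (hη : 0 < η)
    (hηmin : ∀ lam : Fin k → ℝ, (∀ i, 0 ≤ lam i) → (∑ i, lam i) = 1 →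
      η ≤ ‖∑ i, lam i • v i‖)
    (lam : Fin k → ℝ) (hlam : ∀ i, 0 ≤ lam i) (hlamne : lam ≠ 0) :
    (⋂ i, {x : EuclideanSpace ℝ (Fin n) | ⟪v i, x⟫ ≤ α}) ⊆
      {x | ⟪‖∑ i, lam i • v i‖⁻¹ • ∑ i, lam i • v i, x⟫ ≤ α / η} := by
  intro x hx
  simp only [Set.mem_iInter, Set.mem_setOf_eq] at hx ⊢
  set u : EuclideanSpace ℝ (Fin n) := ∑ i, lam i • v i with hu
  set S : ℝ := ∑ i, lam i with hS
  have hSpos : 0 < S := by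
    have hex : ∃ i, 0 < lam i := by
      by_contra h; push_neg at h
      exact hlamne (funext fun i => le_antisymm (h i) (hlam i))
    obtain ⟨i, hi⟩ := hex
    exact Finset.sum_pos' (fun j _ => hlam j) ⟨i, Finset.mem_univ i, hi⟩
  have hmin : η ≤ ‖(S⁻¹ : ℝ) • u‖ := by
    have := hηmin (fun i => S⁻¹ * lam i) (fun i => mul_nonneg (by positivity) (hlam i))
      (by rw [← Finset.mul_sum, inv_mul_cancel₀ hSpos.ne'])
    simpa [hu, Finset.smul_sum, mul_smul] using this
  have hnu : η * S ≤ ‖u‖ := by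
    rw [norm_smul, norm_inv, Real.norm_of_nonneg hSpos.le] at hmin
    calc η * S ≤ (S⁻¹ * ‖u‖) * S := by nlinarith
    _ = ‖u‖ := by field_simp
  have hupos : 0 < ‖u‖ := lt_of_lt_of_le (by positivity) hnu
  have hinner : ⟪u, x⟫ ≤ S * α := by
    rw [hu, hS, sum_inner, Finset.sum_mul]
    apply Finset.sum_le_sum
    intro i _
    rw [real_inner_smul_left]
    exact mul_le_mul_of_nonneg_left (hx i) (hlam i)
  rw [real_inner_smul_left]
  calc ‖u‖⁻¹ * ⟪u, x⟫ ≤ ‖u‖⁻¹ * (S * α) :=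
        mul_le_mul_of_nonneg_left hinner (by positivity)
    _ ≤ α / η := by
        rw [div_eq_mul_inv, inv_mul_le_iff₀ hupos]
        have h1 : (η * S) * (α * η⁻¹) ≤ ‖u‖ * (α * η⁻¹) :=
          mul_le_mul_of_nonneg_right hnu (by positivity)
        have h2 : (η * S) * (α * η⁻¹) = S * α := by field_simp
        linarith
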